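/- Let X be a code over A, z ∈ X*, and y ∈ X. Suppose ψ_X(z) has at least one palindromic prefix P such that Py is a prefix of ψ_X(z), and let Δ_y be the longest such palindromic prefix. Then ψ_X(zy) = ψ_X(z) Δ_y^{-1} ψ_X(z), where ψ_X(z) Δ_y^{-1} denotes the word obtained from ψ_X(z) by erasing its suffix Δ_y (note that Δ_y, being a palindromic prefix of the palindrome ψ_X(z), is also a suffix of ψ_X(z)). -/

import Mathlib

open List

/-- Right palindromic closure: `w⁺ = u Q u~` where `Q` is the longest palindromic
suffix of `w = uQ`; equivalently the shortest palindrome having `w` as a prefix. -/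
noncomputable def palClosure {A : Type*} (w : List A) : List A :=
  letI : DecidablePred fun k => (w.drop k).reverse = w.drop k :=
    fun _ => Classical.propDecidable _
  w ++ (w.take (Nat.find (⟨w.length, by simp⟩ :
    ∃ k, (w.drop k).reverse = w.drop k))).reverse

/-- The palindromization map `ψ_X` relative to a code `X`, evaluated on the
(unique) `X`-factorization `l = [x₁, …, xₙ]` of a word of `X*`. -/
noncomputable def psiList {A : Type*} (l : List (List A)) : List A :=
  l.foldl (fun p x => palClosure (p ++ x)) []

/-- The (usual) palindromization map `ψ` on words, letter by letter. -/
noncomputable def psiWord {A : Type*} (w : List A) : List A :=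
  w.foldl (fun p a => palClosure (p ++ [a])) []

/-- `X` is a code: nonempty words with unique factorization over `X`. -/
def IsCode {A : Type*} (X : Set (List A)) : Prop :=
  (∀ x ∈ X, x ≠ []) ∧
  ∀ l l' : List (List A), (∀ w ∈ l, w ∈ X) → (∀ w ∈ l', w ∈ X) →
    l.flatten = l'.flatten → l = l'

/-- `X` is a prefix code: nonempty words, none a proper prefix of another. -/
def IsPrefixCode {A : Type*} (X : Set (List A)) : Prop :=
  (∀ x ∈ X, x ≠ []) ∧ ∀ x ∈ X, ∀ y ∈ X, x <+: y → x = y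

/-- `X` is a maximal prefix code over `A`. -/
def IsMaximalPrefixCode {A : Type*} (X : Set (List A)) : Prop :=
  IsPrefixCode X ∧ ∀ Y : Set (List A), IsPrefixCode Y → X ⊆ Y → X = Y

/-- `w ∈ X*`. -/
def InStar {A : Type*} (X : Set (List A)) (w : List A) : Prop :=
  ∃ l : List (List A), (∀ u ∈ l, u ∈ X) ∧ l.flatten = w

/-- The finite word `w` is a prefix of the infinite word `s`. -/
def PrefixOfInf {A : Type*} (w : List A) (s : ℕ → A) : Prop :=
  ∀ i : ℕ, ∀ h : i < w.length, w.get ⟨i, h⟩ = s i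

/-- The finite word `w` is a factor of the infinite word `s`. -/
def FactorOfInf {A : Type*} (w : List A) (s : ℕ → A) : Prop :=
  ∃ i : ℕ, w = List.ofFn fun k : Fin w.length => s (i + k.1)

/-- `X` has finite deciphering delay. -/
def FiniteDecipheringDelay {A : Type*} (X : Set (List A)) : Prop :=
  ∃ k : ℕ, ∀ x ∈ X, ∀ x' ∈ X,
    (∃ (l l' : List (List A)) (r : List A),
      (∀ w ∈ l, w ∈ X) ∧ l.length = k ∧ (∀ w ∈ l', w ∈ X) ∧
      x ++ l.flatten ++ r = x' ++ l'.flatten) → x = x'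

/-- The sequence `y = y₁y₂⋯ ∈ X^ω` is alternating. -/
def Alternating {A : Type*} (y : ℕ → List A) : Prop :=
  ∃ a b : A, a ≠ b ∧ ∃ (lam : List A) (idx : ℕ → ℕ), StrictMono idx ∧
    ∀ k : ℕ, (lam ++ [a]) <+: y (idx (2 * k)) ∧ (lam ++ [b]) <+: y (idx (2 * k + 1))

/-- The infinite word `s` is ultimately periodic. -/
def UltimatelyPeriodic {A : Type*} (s : ℕ → A) : Prop :=
  ∃ p : ℕ, 0 < p ∧ ∃ N : ℕ, ∀ n ≥ N, s (n + p) = s n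

/-- The infinite word `s` is uniformly recurrent: every factor occurs in every
sufficiently long factor of `s`. -/
def UniformlyRecurrent {A : Type*} (s : ℕ → A) : Prop :=
  ∀ w : List A, FactorOfInf w s →
    ∃ N : ℕ, ∀ i : ℕ, w <:+: List.ofFn fun k : Fin N => s (i + k.1)

/-- Factor complexity of the infinite word `s`. -/
noncomputable def complexity {A : Type*} (s : ℕ → A) (n : ℕ) : ℕ :=
  {u : List A | u.length = n ∧ FactorOfInf u s}.ncard

/-- A word `w` is primitive if it is not a proper power. -/
def Primitive {A : Type*} (w : List A) : Prop :=
  ∀ (v : List A) (n : ℕ), 1 < n → w ≠ (List.replicate n v).flatten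

lemma palClosure_eq_of {A : Type*} (w : List A) (k : ℕ)
    (hk : (w.drop k).reverse = w.drop k)
    (hmin : ∀ j < k, ¬ (w.drop j).reverse = w.drop j) :
    palClosure w = w ++ (w.take k).reverse := by
  letI : DecidablePred fun k => (w.drop k).reverse = w.drop k :=
    fun _ => Classical.propDecidable _
  have h : ∃ k, (w.drop k).reverse = w.drop k := ⟨w.length, by simp⟩
  have hfind : Nat.find h = k := (Nat.find_eq_iff h).mpr ⟨hk, hmin⟩
  unfold palClosure
  exact congrArg (fun n => w ++ (w.take n).reverse) hfind

lemma palClosure_palindrome {A : Type*} (w : List A) :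
    (palClosure w).reverse = palClosure w := by
  letI : DecidablePred fun k => (w.drop k).reverse = w.drop k :=
    fun _ => Classical.propDecidable _
  have h : ∃ k, (w.drop k).reverse = w.drop k := ⟨w.length, by simp⟩
  show (w ++ (w.take (Nat.find h)).reverse).reverse = w ++ (w.take (Nat.find h)).reverse
  set k := Nat.find h with hkdef
  have hk : (w.drop k).reverse = w.drop k := Nat.find_spec h
  calc (w ++ (w.take k).reverse).reverse
      = w.take k ++ w.reverse := by simp
    _ = w.take k ++ ((w.take k ++ w.drop k).reverse) := by rw [List.take_append_drop]
    _ = w.take k ++ (w.drop k ++ (w.take k).reverse) := by rw [List.reverse_append, hk]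
    _ = w ++ (w.take k).reverse := by rw [← List.append_assoc, List.take_append_drop]

lemma psiList_concat {A : Type*} (l : List (List A)) (y : List A) :
    psiList (l ++ [y]) = palClosure (psiList l ++ y) := by
  simp [psiList, List.foldl_append]

lemma psiList_palindrome {A : Type*} (l : List (List A)) :
    (psiList l).reverse = psiList l := by
  induction l using List.reverseRecOn with
  | nil => simp [psiList]
  | append_singleton l y _ => rw [psiList_concat]; exact palClosure_palindrome _

/-- If `ψ_X(z)` has palindromic prefixes followed by `y ∈ X`
and `Δ` is the longest one, then `ψ_X(zy) = ψ_X(z) Δ⁻¹ ψ_X(z)`. -/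
theorem stmt12 {A : Type*} [Fintype A] (X : Set (List A)) (hX : IsCode X)
    (l : List (List A)) (hl : ∀ w ∈ l, w ∈ X) (y : List A) (hy : y ∈ X)
    (Δ : List A) (hpal : Δ.reverse = Δ) (hpref : Δ ++ y <+: psiList l)
    (hmax : ∀ P : List A, P.reverse = P → P ++ y <+: psiList l →
      P.length ≤ Δ.length) :
    psiList (l ++ [y]) =
      (psiList l).take ((psiList l).length - Δ.length) ++ psiList l := by
  obtain ⟨r, hr⟩ := hpref
  set P := psiList l with hPdef
  have hP : P.reverse = P := psiList_palindrome l
  set u := r.reverse with hu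
  -- second decomposition of P
  have hP2 : P = u ++ (y.reverse ++ Δ) := by
    conv_lhs => rw [← hP, ← hr]
    simp [hpal, hu]
  have hPlen : P.length = u.length + (y.length + Δ.length) := by
    rw [hP2]; simp
  set k := u.length with hk
  -- the drop at k of P ++ y is a palindrome
  have hdropk : ((P ++ y).drop k).reverse = (P ++ y).drop k := by
    have : (P ++ y).drop k = y.reverse ++ (Δ ++ y) := by
      rw [hP2, List.append_assoc, List.append_assoc, hk, List.drop_left]
    rw [this]; simp [hpal]
  -- minimality
  have hmin : ∀ j < k, ¬ ((P ++ y).drop j).reverse = (P ++ y).drop j := by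
    intro j hj hcon
    have hjP : j < P.length := by omega
    have hdj : (P ++ y).drop j = P.drop j ++ y := by
      rw [List.drop_append, Nat.sub_eq_zero_of_le (le_of_lt hjP),
        List.drop_zero]
    set S := P.drop j with hS
    have hSlen : S.length = P.length - j := by simp [hS]
    rw [hdj] at hcon
    -- hcon : (S ++ y).reverse = S ++ y, i.e. y~ ++ S~ = S ++ y
    have hcon' : y.reverse ++ S.reverse = S ++ y := by
      rw [← List.reverse_append]; exact hcon
    have hylen : y.length ≤ S.length := by omega
    have htake : S.take y.length = y.reverse := by
      have := congrArg (List.take y.length) hcon'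
      rw [List.take_append, List.take_append,
        List.take_of_length_le (le_of_eq (List.length_reverse (as := y))),
        Nat.sub_eq_zero_of_le (le_of_eq (List.length_reverse (as := y)).symm),
        List.take_zero, List.append_nil,
        Nat.sub_eq_zero_of_le hylen, List.take_zero, List.append_nil] at this
      exact this.symm
    set S' := S.drop y.length with hS'
    have hSdec : S = y.reverse ++ S' := by
      conv_lhs => rw [← List.take_append_drop y.length S, htake]
    have hS'pal : S'.reverse = S' := by
      rw [hSdec] at hcon'
      simp only [List.reverse_append, List.reverse_reverse, List.append_assoc] at hcon'
      have := List.append_cancel_left hcon'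
      exact List.append_cancel_right this
    -- S' ++ y is a prefix of P
    have hpre : S' ++ y <+: P := by
      refine ⟨(P.take j).reverse, ?_⟩
      have hsplit : P.take j ++ S = P := List.take_append_drop j P
      have h2 : S.reverse ++ (P.take j).reverse = P := by
        rw [← List.reverse_append, hsplit, hP]
      rw [hSdec] at h2
      conv_rhs => rw [← h2]
      rw [List.reverse_append, List.reverse_reverse, hS'pal]
    have := hmax S' hS'pal hpre
    have hS'len : S'.length = S.length - y.length := by simp [hS']
    omega
  have hclosure : palClosure (P ++ y) = (P ++ y) ++ ((P ++ y).take k).reverse :=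
    palClosure_eq_of _ k hdropk hmin
  have htakek : (P ++ y).take k = u := by
    rw [hP2, List.append_assoc, hk, List.take_left]
  rw [psiList_concat, ← hPdef, hclosure, htakek]
  have htake2 : P.take (P.length - Δ.length) = u ++ y.reverse := by
    have : P.length - Δ.length = k + y.length := by omega
    rw [this, hP2, List.take_append, hk]
    simp [List.take_of_length_le]
  rw [htake2]
  -- goal : P ++ y ++ u.reverse = (u ++ y.reverse) ++ P
  conv_lhs => rw [hP2]
  conv_rhs => rw [← hr]
  simp [hu]
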